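/- With A := (1/(2H)) (Φ₀ − m₀) R₀, the following hold: ∫ A² dμ = 1, ∫ A R₀ dμ = 0, and for every t ∈ ℝ, ∫ (A·sin(Ht) + R₀·cos(Ht))² dμ = 1. In particular, the explicit Fisher–Rao geodesic R(t) = A sin(Ht) + R₀ cos(Ht) in square-root coordinates stays on the unit sphere of L²(μ) for all t, with R(0) = R₀ and ∂_tR(0) = ½(Φ₀ − m₀)R₀. -/

import Mathlib

open MeasureTheory

private lemma mul_integrable_of_memL2 {Ω : Type*} [MeasurableSpace Ω] {μ : Measure Ω}
    {f g : Ω → ℝ} (hf : MemLp f 2 μ) (hg : MemLp g 2 μ) :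
    Integrable (fun x => f x * g x) μ := by
  refine ((hf.integrable_sq.add hg.integrable_sq).div_const 2).mono'
    (hf.aestronglyMeasurable.mul hg.aestronglyMeasurable) ?_
  filter_upwards with x
  have h1 : |f x * g x| ≤ (f x ^ 2 + g x ^ 2) / 2 := by
    rcases abs_cases (f x * g x) with ⟨h, _⟩ | ⟨h, _⟩ <;> nlinarith [sq_nonneg (f x - g x), sq_nonneg (f x + g x)]
  simpa [Real.norm_eq_abs, abs_mul] using h1

/-- The explicit Fisher–Rao geodesic `R(t) = A sin(Ht) + R₀ cos(Ht)` in square-root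
coordinates, with `A = (1/(2H))(Φ₀ − m₀)R₀`, stays on the unit sphere of `L²(μ)`:
`∫ A² = 1`, `∫ A R₀ = 0` and `∫ R(t)² = 1` for all `t`; moreover `R(0) = R₀` and
`∂ₜR(0) = ½(Φ₀ − m₀)R₀`. -/
theorem fisher_rao_explicit_geodesic_on_sphere
    {Ω : Type*} [MeasurableSpace Ω] (μ : Measure Ω)
    (R₀ Φ₀ : Ω → ℝ) (hR₀meas : Measurable R₀) (hΦ₀meas : Measurable Φ₀)
    (hR₀L2 : MemLp R₀ 2 μ) (hΦR₀L2 : MemLp (fun x => Φ₀ x * R₀ x) 2 μ)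
    (hnorm : ∫ x, (R₀ x)^2 ∂μ = 1)
    (m₀ q₀ H : ℝ)
    (hm₀ : m₀ = ∫ x, Φ₀ x * (R₀ x)^2 ∂μ)
    (hq₀ : q₀ = ∫ x, (Φ₀ x)^2 * (R₀ x)^2 ∂μ)
    (hH : H = (1/2) * Real.sqrt (q₀ - m₀^2)) (hHpos : 0 < H)
    (A : Ω → ℝ) (hA : ∀ x, A x = (1/(2*H)) * (Φ₀ x - m₀) * R₀ x) :
    (∫ x, (A x)^2 ∂μ = 1) ∧
    (∫ x, A x * R₀ x ∂μ = 0) ∧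
    (∀ t : ℝ, ∫ x, (A x * Real.sin (H*t) + R₀ x * Real.cos (H*t))^2 ∂μ = 1) ∧
    (∀ x, A x * Real.sin (H*0) + R₀ x * Real.cos (H*0) = R₀ x) ∧
    (∀ x, HasDerivAt (fun t => A x * Real.sin (H*t) + R₀ x * Real.cos (H*t))
      ((1/2) * (Φ₀ x - m₀) * R₀ x) 0) := by
  have hHne : H ≠ 0 := ne_of_gt hHpos
  -- 4 H ^ 2 = q₀ - m₀ ^ 2
  have hqm_pos : 0 < q₀ - m₀ ^ 2 := by
    by_contra h
    push_neg at h
    rw [hH, Real.sqrt_eq_zero_of_nonpos h] at hHpos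
    simp at hHpos
  have h4H : 4 * H ^ 2 = q₀ - m₀ ^ 2 := by
    rw [hH, mul_pow, Real.sq_sqrt hqm_pos.le]
    ring
  -- integrability facts
  have iRR : Integrable (fun x => R₀ x ^ 2) μ := hR₀L2.integrable_sq
  have iFR : Integrable (fun x => Φ₀ x * R₀ x ^ 2) μ := by
    have := mul_integrable_of_memL2 hΦR₀L2 hR₀L2
    simpa [mul_assoc, sq] using this
  have iFF : Integrable (fun x => (Φ₀ x) ^ 2 * (R₀ x) ^ 2) μ := by
    have := hΦR₀L2.integrable_sq
    have heq : (fun x => (Φ₀ x * R₀ x) ^ 2) = fun x => (Φ₀ x) ^ 2 * (R₀ x) ^ 2 := by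
      funext x; ring
    rwa [heq] at this
  -- first: ∫ A² = 1
  have hAsq : ∫ x, (A x)^2 ∂μ = 1 := by
    have e : ∀ x, (A x) ^ 2 =
        (1/(2*H))^2 * ((Φ₀ x)^2 * (R₀ x)^2) - (2*m₀*(1/(2*H))^2) * (Φ₀ x * (R₀ x)^2)
          + (m₀^2*(1/(2*H))^2) * ((R₀ x)^2) := by
      intro x; rw [hA]; ring
    calc ∫ x, (A x)^2 ∂μ
        = ∫ x, ((1/(2*H))^2 * ((Φ₀ x)^2 * (R₀ x)^2) - (2*m₀*(1/(2*H))^2) * (Φ₀ x * (R₀ x)^2)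
          + (m₀^2*(1/(2*H))^2) * ((R₀ x)^2)) ∂μ := by
            exact integral_congr_ae (Filter.Eventually.of_forall e)
      _ = (1/(2*H))^2 * q₀ - (2*m₀*(1/(2*H))^2) * m₀ + (m₀^2*(1/(2*H))^2) * 1 := by
            have i1 : Integrable (fun x => (1/(2*H))^2 * ((Φ₀ x)^2 * (R₀ x)^2)
                - (2*m₀*(1/(2*H))^2) * (Φ₀ x * (R₀ x)^2)) μ :=
              (iFF.const_mul _).sub (iFR.const_mul _)
            rw [integral_add i1 (iRR.const_mul _),
              integral_sub (iFF.const_mul _) (iFR.const_mul _),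
              integral_const_mul, integral_const_mul, integral_const_mul,
              hnorm, ← hm₀, ← hq₀]
      _ = 1 := by field_simp; nlinarith [h4H]
  -- second: ∫ A R₀ = 0
  have hAR : ∫ x, A x * R₀ x ∂μ = 0 := by
    have e : ∀ x, A x * R₀ x =
        (1/(2*H)) * (Φ₀ x * (R₀ x)^2) - ((1/(2*H))*m₀) * ((R₀ x)^2) := by
      intro x; rw [hA]; ring
    calc ∫ x, A x * R₀ x ∂μ
        = ∫ x, ((1/(2*H)) * (Φ₀ x * (R₀ x)^2) - ((1/(2*H))*m₀) * ((R₀ x)^2)) ∂μ :=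
          integral_congr_ae (Filter.Eventually.of_forall e)
      _ = (1/(2*H)) * m₀ - ((1/(2*H))*m₀) * 1 := by
          rw [integral_sub (iFR.const_mul _) (iRR.const_mul _),
            integral_const_mul, integral_const_mul, hnorm, ← hm₀]
      _ = 0 := by ring
  refine ⟨hAsq, hAR, ?_, ?_, ?_⟩
  · intro t
    set s := Real.sin (H*t)
    set c := Real.cos (H*t)
    have iAA : Integrable (fun x => (A x)^2) μ := by
      have h : MemLp (fun x => (1/(2*H)) * (Φ₀ x * R₀ x) - ((1/(2*H))*m₀) * R₀ x) 2 μ :=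
        (hΦR₀L2.const_mul _).sub (hR₀L2.const_mul _)
      have hAL2 : MemLp A 2 μ := by
        refine h.ae_eq ?_
        filter_upwards with x
        rw [hA]; ring
      exact hAL2.integrable_sq
    have iAR' : Integrable (fun x => A x * R₀ x) μ := by
      have e : ∀ x, A x * R₀ x =
          (1/(2*H)) * (Φ₀ x * (R₀ x)^2) - ((1/(2*H))*m₀) * ((R₀ x)^2) := by
        intro x; rw [hA]; ring
      have i0 : Integrable (fun x => (1/(2*H)) * (Φ₀ x * (R₀ x)^2)
          - ((1/(2*H))*m₀) * ((R₀ x)^2)) μ := (iFR.const_mul _).sub (iRR.const_mul _)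
      refine i0.congr ?_
      filter_upwards with x using (e x).symm
    have e : ∀ x, (A x * s + R₀ x * c)^2 =
        s^2 * (A x)^2 + (2*s*c) * (A x * R₀ x) + c^2 * (R₀ x)^2 := by
      intro x; ring
    calc ∫ x, (A x * s + R₀ x * c)^2 ∂μ
        = ∫ x, (s^2 * (A x)^2 + (2*s*c) * (A x * R₀ x) + c^2 * (R₀ x)^2) ∂μ :=
          integral_congr_ae (Filter.Eventually.of_forall e)
      _ = s^2 * 1 + (2*s*c) * 0 + c^2 * 1 := by
          have i1 : Integrable (fun x => s^2 * (A x)^2 + (2*s*c) * (A x * R₀ x)) μ :=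
            (iAA.const_mul _).add (iAR'.const_mul _)
          rw [integral_add i1 (iRR.const_mul _),
            integral_add (iAA.const_mul _) (iAR'.const_mul _),
            integral_const_mul, integral_const_mul, integral_const_mul,
            hAsq, hAR, hnorm]
      _ = 1 := by
          have := Real.sin_sq_add_cos_sq (H*t)
          simp only [s, c]; nlinarith [this]
  · intro x; simp
  · intro x
    have h1 : HasDerivAt (fun t : ℝ => A x * Real.sin (H*t)) (A x * (Real.cos (H*0) * H)) 0 := by
      have : HasDerivAt (fun t : ℝ => Real.sin (H*t)) (Real.cos (H*0) * H) 0 := by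
        have hlin : HasDerivAt (fun t : ℝ => H * t) H 0 := by
          simpa using (hasDerivAt_id (0:ℝ)).const_mul H
        exact (Real.hasDerivAt_sin (H*0)).comp 0 hlin
      exact this.const_mul (A x)
    have h2 : HasDerivAt (fun t : ℝ => R₀ x * Real.cos (H*t)) (R₀ x * (-Real.sin (H*0) * H)) 0 := by
      have : HasDerivAt (fun t : ℝ => Real.cos (H*t)) (-Real.sin (H*0) * H) 0 := by
        have hlin : HasDerivAt (fun t : ℝ => H * t) H 0 := by
          simpa using (hasDerivAt_id (0:ℝ)).const_mul H
        exact (Real.hasDerivAt_cos (H*0)).comp 0 hlin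
      exact this.const_mul (R₀ x)
    have := h1.add h2
    have heq : A x * (Real.cos (H*0) * H) + R₀ x * (-Real.sin (H*0) * H)
        = (1/2) * (Φ₀ x - m₀) * R₀ x := by
      simp only [mul_zero, Real.cos_zero, Real.sin_zero]
      rw [hA]
      field_simp
      ring
    rwa [heq] at this
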